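/- Let K be a complete non-archimedean valued field whose residue class field is formally real. Then the bilinear form ⟨x,y⟩ = Σ_{i=1}^∞ x_i y_i on c₀ × c₀ satisfies |⟨x,x⟩| = ‖x‖_∞² for every x ∈ c₀; in particular ⟨x,x⟩ = 0 implies x = 0. -/

import Mathlib

open Filter Topology

noncomputable section

/-- `c₀(ℕ, K)`: the space of `K`-valued null sequences (zero-at-infinity functions on
discrete `ℕ`), with the supremum norm. -/
abbrev Cz (K : Type) [NontriviallyNormedField K] := ZeroAtInftyContinuousMap ℕ K

/-- The canonical bilinear form `⟨x, y⟩ = ∑ᵢ xᵢ yᵢ` on `c₀`. -/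
def pr {K : Type} [NontriviallyNormedField K] (x y : Cz K) : K := ∑' i, x i * y i

/-- The canonical basis vector `eᵢ` of `c₀`. -/
def e (K : Type) [NontriviallyNormedField K] (i : ℕ) : Cz K where
  toFun := fun j => if j = i then (1 : K) else 0
  continuous_toFun := continuous_of_discreteTopology
  zero_at_infty' := by
    rw [cocompact_eq_atTop (α := ℕ)]
    apply tendsto_nhds_of_eventually_eq
    filter_upwards [eventually_gt_atTop i] with j hj
    simp [hj.ne']

/-- A continuous linear operator on `c₀` is compact iff it is a uniform limit of
finite-rank continuous operators (equivalently, it maps the unit ball to a compactoid). -/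
def IsCompactOp {K : Type} [NontriviallyNormedField K] (T : Cz K →L[K] Cz K) : Prop :=
  ∀ ε : ℝ, 0 < ε → ∃ S : Cz K →L[K] Cz K,
    Module.Finite K (LinearMap.range (S : Cz K →ₗ[K] Cz K)) ∧ ‖T - S‖ ≤ ε

/-- The closed unit ball of a non-archimedean valued field, as a subring
(the valuation ring). -/
def valRing {K : Type} [NontriviallyNormedField K]
    (hna : IsNonarchimedean (norm : K → ℝ)) : Subring K where
  carrier := {x : K | ‖x‖ ≤ 1}
  mul_mem' := fun {a b} ha hb => by
    simp only [Set.mem_setOf_eq] at *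
    rw [norm_mul]
    nlinarith [norm_nonneg a, norm_nonneg b]
  one_mem' := by simp
  add_mem' := fun {a b} ha hb => by
    simp only [Set.mem_setOf_eq] at *
    exact (hna a b).trans (max_le ha hb)
  zero_mem' := by simp
  neg_mem' := fun {a} ha => by simpa using ha

/-- The maximal ideal (open unit ball) of the valuation ring. -/
def valIdeal {K : Type} [NontriviallyNormedField K]
    (hna : IsNonarchimedean (norm : K → ℝ)) : Ideal (valRing hna) where
  carrier := {x | ‖(x : K)‖ < 1}
  add_mem' := fun {a b} ha hb => by
    simp only [Set.mem_setOf_eq] at *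
    push_cast
    exact ((hna a b)).trans_lt (max_lt ha hb)
  zero_mem' := by simp
  smul_mem' := fun c x hx => by
    simp only [Set.mem_setOf_eq, smul_eq_mul] at *
    push_cast
    rw [norm_mul]
    calc ‖(c : K)‖ * ‖(x : K)‖ ≤ 1 * ‖(x : K)‖ := by
          exact mul_le_mul_of_nonneg_right c.2 (norm_nonneg _)
      _ = ‖(x : K)‖ := one_mul _
      _ < 1 := hx

/-- The residue class field of a non-archimedean valued field. -/
abbrev Residue {K : Type} [NontriviallyNormedField K]
    (hna : IsNonarchimedean (norm : K → ℝ)) : Type :=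
  valRing hna ⧸ valIdeal hna

/-- A commutative ring is formally real if `-1` is not a sum of squares. -/
def FormallyRealRing (R : Type) [CommRing R] : Prop :=
  ¬ ∃ (n : ℕ) (a : Fin n → R), (∑ i, a i ^ 2) = -1


section Aux

variable {K : Type} [NontriviallyNormedField K]

lemma czNorm_coe_le (x : Cz K) (i : ℕ) : ‖x i‖ ≤ ‖x‖ := by
  have := x.toBCF.norm_coe_le_norm i
  simpa [ZeroAtInftyContinuousMap.norm_toBCF_eq_norm] using this

lemma czNorm_le (x : Cz K) {C : ℝ} (hC : 0 ≤ C) (h : ∀ i, ‖x i‖ ≤ C) : ‖x‖ ≤ C := by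
  rw [← ZeroAtInftyContinuousMap.norm_toBCF_eq_norm]
  exact (BoundedContinuousFunction.norm_le hC).mpr h

set_option synthInstance.maxHeartbeats 1000000 in
lemma aux_sum_one (hna : IsNonarchimedean (norm : K → ℝ))
    (hres : FormallyRealRing (Residue hna)) (s : Finset ℕ) (b : ℕ → K)
    (hb : ∀ i ∈ s, ‖b i‖ ≤ 1) (i0 : ℕ) (hi0 : i0 ∈ s) (h1 : b i0 = 1) :
    ‖∑ i ∈ s, b i ^ 2‖ = 1 := by
  haveI := IsUltrametricDist.isUltrametricDist_of_isNonarchimedean_norm hna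
  have hle : ‖∑ i ∈ s, b i ^ 2‖ ≤ 1 := by
    apply IsUltrametricDist.norm_sum_le_of_forall_le_of_nonneg zero_le_one
    intro i hi
    rw [norm_pow]
    exact pow_le_one₀ (norm_nonneg _) (hb i hi)
  rcases hle.lt_or_eq with hlt | heq
  · exfalso
    set B : ℕ → valRing hna := fun i => if h : i ∈ s then ⟨b i, hb i h⟩ else 0 with hB
    have hcoe : ((∑ i ∈ s, B i ^ 2 : valRing hna) : K) = ∑ i ∈ s, b i ^ 2 := by
      push_cast
      refine Finset.sum_congr rfl fun i hi => ?_
      simp [hB, dif_pos hi]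
    have hmem : (∑ i ∈ s, B i ^ 2) ∈ valIdeal hna := by
      show ‖((∑ i ∈ s, B i ^ 2 : valRing hna) : K)‖ < 1
      rw [hcoe]; exact hlt
    have hq : (∑ i ∈ s, (Ideal.Quotient.mk (valIdeal hna) (B i)) ^ 2) = 0 := by
      have := map_sum (Ideal.Quotient.mk (valIdeal hna)) (fun i => B i ^ 2) s
      simp only [map_pow] at this
      rw [← this]
      exact Ideal.Quotient.eq_zero_iff_mem.mpr hmem
    have hB0 : B i0 = 1 := by
      apply Subtype.ext
      simp [hB, dif_pos hi0, h1]
    rw [← Finset.add_sum_erase _ _ hi0, hB0, map_one, one_pow] at hq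
    have hneg : ∑ i ∈ s.erase i0, (Ideal.Quotient.mk (valIdeal hna) (B i)) ^ 2 = -1 :=
      eq_neg_of_add_eq_zero_right hq
    apply hres
    refine ⟨(s.erase i0).card,
      fun j => Ideal.Quotient.mk _ (B ((s.erase i0).equivFin.symm j)), ?_⟩
    rw [← hneg, ← Finset.sum_coe_sort (s.erase i0)
      (fun i => (Ideal.Quotient.mk (valIdeal hna) (B i)) ^ 2)]
    exact Equiv.sum_comp (s.erase i0).equivFin.symm
      (fun i => (Ideal.Quotient.mk (valIdeal hna) (B i)) ^ 2)
  · exact heq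

lemma aux_sum_sq (hna : IsNonarchimedean (norm : K → ℝ))
    (hres : FormallyRealRing (Residue hna)) (s : Finset ℕ) (a : ℕ → K) (i0 : ℕ)
    (hi0 : i0 ∈ s) (hmax : ∀ i ∈ s, ‖a i‖ ≤ ‖a i0‖) (h0 : a i0 ≠ 0) :
    ‖∑ i ∈ s, a i ^ 2‖ = ‖a i0‖ ^ 2 := by
  have hpos : 0 < ‖a i0‖ := norm_pos_iff.mpr h0
  have h1 : ‖∑ i ∈ s, (a i / a i0) ^ 2‖ = 1 := by
    refine aux_sum_one hna hres s _ (fun i hi => ?_) i0 hi0 (div_self h0)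
    rw [norm_div]
    exact (div_le_one hpos).mpr (hmax i hi)
  have heq : ∑ i ∈ s, a i ^ 2 = a i0 ^ 2 * ∑ i ∈ s, (a i / a i0) ^ 2 := by
    rw [Finset.mul_sum]
    refine Finset.sum_congr rfl fun i _ => ?_
    field_simp
  rw [heq, norm_mul, h1, mul_one, norm_pow]

end Aux

theorem stmt1 {K : Type} [NontriviallyNormedField K] [CompleteSpace K]
    (hna : IsNonarchimedean (norm : K → ℝ))
    (hres : FormallyRealRing (Residue hna)) :
    (∀ x : Cz K, ‖pr x x‖ = ‖x‖ ^ 2) ∧ (∀ x : Cz K, pr x x = 0 → x = 0) := by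
  haveI := IsUltrametricDist.isUltrametricDist_of_isNonarchimedean_norm hna
  have main : ∀ x : Cz K, ‖pr x x‖ = ‖x‖ ^ 2 := by
    intro x
    rcases eq_or_ne x 0 with rfl | hx
    · simp [pr]
    · set M := ‖x‖ with hM
      have hM0 : 0 < M := by
        rcases (norm_nonneg x).lt_or_eq with h | h
        · exact h
        · refine absurd ?_ hx
          ext i
          have := czNorm_coe_le x i
          rw [← h] at this
          simpa using norm_le_zero_iff.mp this
      have htend : Filter.Tendsto (fun i => x i) Filter.cofinite (𝓝 0) := by
        have := x.zero_at_infty'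
        rwa [cocompact_eq_atTop (α := ℕ), ← Nat.cofinite_eq_atTop] at this
      have h0' : Filter.Tendsto (fun i => ‖x i‖) Filter.cofinite (𝓝 0) := by
        simpa using htend.norm
      have hfinF : {i : ℕ | M ≤ ‖x i‖}.Finite := by
        have h := Filter.eventually_cofinite.mp (h0'.eventually_lt_const hM0)
        simpa [not_lt] using h
      have hfinT : {i : ℕ | M / 2 ≤ ‖x i‖}.Finite := by
        have h := Filter.eventually_cofinite.mp (h0'.eventually_lt_const (half_pos hM0))
        simpa [not_lt] using h
      set F := hfinF.toFinset with hF
      set T := hfinT.toFinset with hT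
      have hmemF : ∀ i, i ∈ F ↔ M ≤ ‖x i‖ := fun i => by
        simp [hF, Set.Finite.mem_toFinset]
      have hmemT : ∀ i, i ∈ T ↔ M / 2 ≤ ‖x i‖ := fun i => by
        simp [hT, Set.Finite.mem_toFinset]
      have hTne : T.Nonempty := by
        by_contra h
        rw [Finset.not_nonempty_iff_eq_empty] at h
        have hb : ∀ i, ‖x i‖ ≤ M / 2 := by
          intro i
          by_contra hh
          push_neg at hh
          have : i ∈ T := (hmemT i).mpr hh.le
          simp [h] at this
        have := czNorm_le x (by positivity) hb
        linarith
      obtain ⟨i0, hi0T, hmax0⟩ := T.exists_max_image (fun i => ‖x i‖) hTne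
      have hmaxall : ∀ i, ‖x i‖ ≤ ‖x i0‖ := by
        intro i
        by_cases hi : i ∈ T
        · exact hmax0 i hi
        · have h1 : ‖x i‖ < M / 2 := by
            have := (hmemT i).not.mp hi
            linarith [not_le.mp this]
          have h2 : M / 2 ≤ ‖x i0‖ := (hmemT i0).mp hi0T
          linarith
      have hMi0 : ‖x i0‖ = M :=
        le_antisymm (czNorm_coe_le x i0) (czNorm_le x (norm_nonneg _) hmaxall)
      have hi0F : i0 ∈ F := (hmemF i0).mpr hMi0.ge
      have hx0ne : x i0 ≠ 0 := by
        intro h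
        rw [h, norm_zero] at hMi0
        linarith
      obtain ⟨δ, hδ0, hδM, hδ⟩ :
          ∃ δ : ℝ, 0 ≤ δ ∧ δ < M ∧ ∀ i, i ∉ F → ‖x i‖ ≤ δ := by
        by_cases hTF : (T \ F).Nonempty
        · obtain ⟨j, hjTF, hmaxj⟩ := (T \ F).exists_max_image (fun i => ‖x i‖) hTF
          refine ⟨max (M / 2) ‖x j‖, le_max_of_le_left (by positivity), ?_, ?_⟩
          · have hjF : j ∉ F := (Finset.mem_sdiff.mp hjTF).2
            have : ‖x j‖ < M := not_le.mp ((hmemF j).not.mp hjF)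
            exact max_lt (by linarith) this
          · intro i hiF
            by_cases hi : i ∈ T
            · exact le_max_of_le_right (hmaxj i (Finset.mem_sdiff.mpr ⟨hi, hiF⟩))
            · have : ‖x i‖ < M / 2 := not_le.mp ((hmemT i).not.mp hi)
              exact le_max_of_le_left this.le
        · refine ⟨M / 2, by positivity, by linarith, ?_⟩
          intro i hiF
          by_cases hi : i ∈ T
          · exact absurd ⟨hi, hiF⟩ (fun h => hTF ⟨i, Finset.mem_sdiff.mpr h⟩)
          · exact (not_le.mp ((hmemT i).not.mp hi)).le
      have hsum : Summable (fun i => x i * x i) := by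
        apply NonarchimedeanAddGroup.summable_of_tendsto_cofinite_zero
        simpa using htend.mul htend
      have hsplit := Summable.sum_add_tsum_compl (s := F) hsum
      have hfront : ‖∑ i ∈ F, x i * x i‖ = M ^ 2 := by
        have := aux_sum_sq hna hres F (fun i => x i) i0 hi0F
          (fun i _ => hmaxall i) hx0ne
        simp only [pow_two] at this ⊢
        rw [this, hMi0]
      have htail : ‖∑' (i : ↑((↑F : Set ℕ)ᶜ)), x ↑i * x ↑i‖ ≤ δ ^ 2 := by
        apply IsUltrametricDist.norm_tsum_le_of_forall_le_of_nonneg (by positivity)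
        rintro ⟨i, hi⟩
        have hiF : i ∉ F := by simpa using hi
        have h1 := hδ i hiF
        have h2 := norm_nonneg (x i)
        rw [norm_mul]
        nlinarith
      have htail' : ‖∑' (i : ↑((↑F : Set ℕ)ᶜ)), x ↑i * x ↑i‖ < M ^ 2 := by
        refine lt_of_le_of_lt htail ?_
        nlinarith
      have : ‖pr x x‖ = ‖(∑ i ∈ F, x i * x i) + ∑' (i : ↑((↑F : Set ℕ)ᶜ)), x ↑i * x ↑i‖ := by
        rw [pr, ← hsplit]
      rw [this, IsUltrametricDist.norm_add_eq_max_of_norm_ne_norm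
        (by rw [hfront]; exact (htail'.trans_le le_rfl).ne'), hfront]
      exact max_eq_left htail'.le
  refine ⟨main, fun x h => ?_⟩
  have h1 := main x
  rw [h, norm_zero] at h1
  have h2 : ‖x‖ = 0 := by nlinarith [norm_nonneg x]
  ext i
  have := czNorm_coe_le x i
  rw [h2] at this
  simpa using norm_le_zero_iff.mp this
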